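/- Let (X,r) be a finite bijective non-degenerate set-theoretic solution of the Yang–Baxter equation whose left derived rack, given by x ◁ y = λ_y(ρ_{λ_x^{-1}(y)}(x)), is a quandle (i.e. x ◁ x = x for all x). Then the right derived rack of (X,r) is also a quandle; equivalently, for every y ∈ X there exists a unique x ∈ X with r(x,y) = (x,y), and for every x ∈ X there is a unique y with r(x,y)=(x,y). -/

import Mathlib

open Function

section Defs

variable {X Y : Type*}

/-- `r₁₂ = r × id` on `X³`. -/
def r12 (r : X × X → X × X) : X × X × X → X × X × X :=
  fun p => ((r (p.1, p.2.1)).1, (r (p.1, p.2.1)).2, p.2.2)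

/-- `r₂₃ = id × r` on `X³`. -/
def r23 (r : X × X → X × X) : X × X × X → X × X × X :=
  fun p => (p.1, r p.2)

/-- The Yang--Baxter (braid) equation. -/
def IsYB (r : X × X → X × X) : Prop :=
  (r12 r) ∘ (r23 r) ∘ (r12 r) = (r23 r) ∘ (r12 r) ∘ (r23 r)

/-- The solution map `r(x,y) = (λ_x(y), ρ_y(x))` built from `λ` and `ρ`. -/
def rMap (lam : X → Equiv.Perm X) (rho : X → X → X) : X × X → X × X :=
  fun p => (lam p.1 p.2, rho p.2 p.1)

/-- `(X, r)` with `r(x,y) = (λ_x(y), ρ_y(x))` is a bijective non-degenerate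
set-theoretic solution of the Yang--Baxter equation. -/
def IsSolution (lam : X → Equiv.Perm X) (rho : X → X → X) : Prop :=
  IsYB (rMap lam rho) ∧ Bijective (rMap lam rho) ∧ ∀ y, Bijective (rho y)

/-- The (left) derived operation `σ_y(x) = x ◁ y = λ_y(ρ_{λ_x⁻¹(y)}(x))`. -/
def sigMap (lam : X → Equiv.Perm X) (rho : X → X → X) (y : X) : X → X :=
  fun x => lam y (rho ((lam x).symm y) x)

/-- A biquandle: a solution whose derived rack is a quandle. -/
def IsBiquandle (lam : X → Equiv.Perm X) (rho : X → X → X) : Prop :=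
  IsSolution lam rho ∧ ∀ x, sigMap lam rho x x = x

/-- The diagonal map `q(x) = λ_x⁻¹(x)`. -/
def qMap (lam : X → Equiv.Perm X) : X → X := fun x => (lam x).symm x

/-- `λ` of the `k`-th additive multiple: `λ_{kx}` restricted to `X`,
computed via `kx = x ∘ q(x) ∘ ⋯ ∘ q^{k-1}(x)` and `λ_{a∘b} = λ_a λ_b`. -/
def lamCab (lam : X → Equiv.Perm X) : ℕ → X → Equiv.Perm X
  | 0, _ => 1
  | k+1, x => lam x * lamCab lam k (qMap lam x)

/-- `σ` of the `k`-th additive multiple: `σ_{ky} = σ_y^k` restricted to `X`. -/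
def sigCab (lam : X → Equiv.Perm X) (rho : X → X → X) (k : ℕ) (y : X) : X → X :=
  (sigMap lam rho y)^[k]

/-- `ρ` of the `k`-cabled solution, via `ρ_b(a) = λ_{λ_a(b)}⁻¹ σ_{λ_a(b)}(a)`. -/
def rhoCab (lam : X → Equiv.Perm X) (rho : X → X → X) (k : ℕ) (y x : X) : X :=
  (lamCab lam k (lamCab lam k x y)).symm (sigCab lam rho k (lamCab lam k x y) x)

/-- The `k`-cabled solution `r^{(k)}`. -/
def rCab (lam : X → Equiv.Perm X) (rho : X → X → X) (k : ℕ) : X × X → X × X :=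
  rMap (lamCab lam k) (rhoCab lam rho k)

/-- `f` is a morphism of solutions `(X,r) → (Y,s)`. -/
def IsMor (r : X × X → X × X) (s : Y × Y → Y × Y) (f : X → Y) : Prop :=
  ∀ p, Prod.map f f (r p) = s (Prod.map f f p)

/-- `(X,r)` is `n`-decomposable: a partition into `n` nonempty subsolutions
`X_1, …, X_n` with `r(X_i × X_j) = X_j × X_i`. -/
def NDecomp (r : X × X → X × X) (n : ℕ) : Prop :=
  ∃ P : Fin n → Set X, (∀ i, (P i).Nonempty) ∧
    (∀ i j, i ≠ j → Disjoint (P i) (P j)) ∧ (⋃ i, P i) = Set.univ ∧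
    ∀ i j, r '' ((P i) ×ˢ (P j)) = (P j) ×ˢ (P i)

/-- `(X,r)` is decomposable: a partition `X = Y ⊔ Z` into nonempty parts with
`r(Y×Y) ⊆ Y×Y` and `r(Z×Z) ⊆ Z×Z`. -/
def Decomposable (r : X × X → X × X) : Prop :=
  ∃ A B : Set X, A.Nonempty ∧ B.Nonempty ∧ Disjoint A B ∧ A ∪ B = Set.univ ∧
    r '' (A ×ˢ A) ⊆ A ×ˢ A ∧ r '' (B ×ˢ B) ⊆ B ×ˢ B

/-- A solution is simple if every epimorphic image is isomorphic to it or a singleton. -/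
def SimpleSol {X : Type u} (r : X × X → X × X) : Prop :=
  ∀ (Z : Type u) (s : Z × Z → Z × Z) (f : X → Z),
    Surjective f → IsMor r s f → Bijective f ∨ Subsingleton Z

/-- The image in `Perm X` of the group `S(X,r) = ⟨σ_x⁻¹ : x ∈ X⟩ ⋊ 𝒢(X,r)`
acting on `X` via `(σ_a⁻¹, λ_b, ρ_b⁻¹) · x = σ_a⁻¹ λ_b (x)`:
the subgroup of `Perm X` generated by all `σ_x` and `λ_x`. -/
def permGroupOf (lam : X → Equiv.Perm X) (rho : X → X → X) : Subgroup (Equiv.Perm X) :=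
  Subgroup.closure {g : Equiv.Perm X | (∃ y, ⇑g = sigMap lam rho y) ∨ ∃ y, g = lam y}

/-- Relations `x ∘ y = l(x,y) ∘ ρ(y,x)` defining a structure group. -/
def relsOf (l ρ : X → X → X) : Set (FreeGroup X) :=
  {w | ∃ x y : X, w = FreeGroup.of x * FreeGroup.of y *
      (FreeGroup.of (l x y) * FreeGroup.of (ρ y x))⁻¹}

end Defs

/-- if the left derived rack of a solution is a quandle, then the right
derived rack is a quandle; equivalently, fixed pairs of `r` exist uniquely in each slot. -/
theorem right_derived_rack_is_quandle {X : Type*} [Finite X]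
    (lam : X → Equiv.Perm X) (rho : X → X → X)
    (hsol : IsSolution lam rho) (hq : ∀ x, sigMap lam rho x x = x) :
    (∀ y : X, ∃! x : X, rMap lam rho (x, y) = (x, y)) ∧
    (∀ x : X, ∃! y : X, rMap lam rho (x, y) = (x, y)) := by
  obtain ⟨-, -, hrho⟩ := hsol
  -- the diagonal map
  set q : X → X := qMap lam with hqdef
  -- each (x, q x) is a fixed pair
  have hfix : ∀ x, rMap lam rho (x, q x) = (x, q x) := by
    intro x
    have h1 : lam x (q x) = x := by simp [hqdef, qMap]
    have h2 : rho (q x) x = q x := by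
      have := hq x
      unfold sigMap at this
      have : lam x (rho ((lam x).symm x) x) = x := this
      have h3 : rho ((lam x).symm x) x = (lam x).symm x := by
        have := congrArg (lam x).symm this
        simpa using this
      simpa [hqdef, qMap] using h3
    simp [rMap, h1, h2]
  -- any fixed pair (x, y) has y = q x
  have hchar : ∀ x y, rMap lam rho (x, y) = (x, y) → y = q x := by
    intro x y h
    have h1 : lam x y = x := congrArg Prod.fst h
    have : (lam x).symm (lam x y) = (lam x).symm x := congrArg (lam x).symm h1
    simpa [hqdef, qMap] using this
  -- q is injective
  have hinj : Function.Injective q := by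
    intro x₁ x₂ h
    have f1 := hfix x₁
    have f2 := hfix x₂
    have r1 : rho (q x₁) x₁ = q x₁ := congrArg Prod.snd f1
    have r2 : rho (q x₁) x₂ = q x₁ := by
      have := congrArg Prod.snd f2
      rw [← h] at this
      simpa [rMap] using this
    exact (hrho (q x₁)).1 (r1.trans r2.symm)
  have hsurj : Function.Surjective q := Finite.surjective_of_injective hinj
  constructor
  · intro y
    obtain ⟨x, rfl⟩ := hsurj y
    refine ⟨x, hfix x, ?_⟩
    intro x' hx'
    exact hinj (hchar x' (q x) hx').symm
  · intro x
    refine ⟨q x, hfix x, ?_⟩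
    intro y hy
    exact hchar x y hy
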